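/- arXiv:0801.0157 — 2 statements merged into one kernel-verified Lean document; each statement's English description precedes it below -/
import Mathlib

section
/- In a sovereign monoidal category with simple and absolutely simple tensor unit, an object X is invertible if and only if the duality morphisms b_X : 1 → X ⊗ X^∨ and b̃_X : 1 → X^∨ ⊗ X are invertible. -/
open CategoryTheory MonoidalCategory

namespace SovereignAux

variable {C : Type*} [Category C] [MonoidalCategory C]

lemma conj_nat {P Q A B : C} (w : P ⊗ Q ⟶ 𝟙_ C) (g : A ⟶ B) :
    P ◁ Q ◁ g ≫ (α_ P Q B).inv ≫ w ▷ B ≫ (λ_ B).hom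
      = (α_ P Q A).inv ≫ w ▷ A ≫ (λ_ A).hom ≫ g := by
  rw [associator_inv_naturality_right_assoc, whisker_exchange_assoc]
  simp

lemma whiskerLeft_cancel {P Q : C} (w : P ⊗ Q ≅ 𝟙_ C) {A B : C} {g h : A ⟶ B}
    (H : Q ◁ g = Q ◁ h) : g = h := by
  have h1 := conj_nat w.hom g
  have h2 := conj_nat w.hom h
  rw [H] at h1
  rw [h2] at h1
  rw [cancel_epi, cancel_epi, cancel_epi] at h1
  exact h1.symm

section Pairing

variable (X X' : C) (e : X ⊗ X' ≅ 𝟙_ C) (f : X' ⊗ X ≅ 𝟙_ C)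

/-- The "corrected" evaluation morphism. -/
def dEv : X' ⊗ X ⟶ 𝟙_ C :=
  (λ_ (X' ⊗ X)).inv ≫ f.inv ▷ (X' ⊗ X) ≫ (α_ X' X (X' ⊗ X)).hom
    ≫ X' ◁ ((α_ X X' X).inv ≫ e.hom ▷ X ≫ (λ_ X).hom ≫ (ρ_ X).inv)
    ≫ (α_ X' X (𝟙_ C)).inv ≫ f.hom ▷ (𝟙_ C) ≫ (λ_ (𝟙_ C)).hom

lemma whiskerLeft_dEv :
    X ◁ dEv X X' e f = (α_ X X' X).inv ≫ e.hom ▷ X ≫ (λ_ X).hom ≫ (ρ_ X).inv := by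
  apply whiskerLeft_cancel e
  have h1 := conj_nat f.hom (dEv X X' e f)
  have h2 : (α_ X' X (X' ⊗ X)).inv ≫ f.hom ▷ (X' ⊗ X) ≫ (λ_ (X' ⊗ X)).hom ≫ dEv X X' e f
      = X' ◁ ((α_ X X' X).inv ≫ e.hom ▷ X ≫ (λ_ X).hom ≫ (ρ_ X).inv)
        ≫ (α_ X' X (𝟙_ C)).inv ≫ f.hom ▷ (𝟙_ C) ≫ (λ_ (𝟙_ C)).hom := by
    simp only [dEv, Category.assoc, Iso.hom_inv_id_assoc, hom_inv_whiskerRight_assoc,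
      Iso.inv_hom_id_assoc, Iso.hom_inv_id, Iso.inv_hom_id, Category.comp_id, Category.id_comp]
  rw [h2] at h1
  rw [cancel_mono] at h1
  exact h1

lemma zig1 :
    e.inv ▷ X ≫ (α_ X X' X).hom ≫ X ◁ dEv X X' e f = (λ_ X).hom ≫ (ρ_ X).inv := by
  rw [whiskerLeft_dEv]
  simp

lemma zig1'' :
    e.inv ▷ X ⊗≫ X ◁ dEv X X' e f = ⊗𝟙.hom := by
  convert zig1 X X' e f <;> simp [monoidalComp]

lemma unit_interchange {T : C} (b : 𝟙_ C ⟶ T) :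
    b ≫ (ρ_ T).inv ≫ T ◁ b = b ≫ (λ_ T).inv ≫ b ▷ T := by
  rw [rightUnitor_inv_naturality_assoc, ← whisker_exchange,
    leftUnitor_inv_naturality_assoc, unitors_inv_equal]

lemma zig2 :
    X' ◁ e.inv ≫ (α_ X' X X').inv ≫ dEv X X' e f ▷ X' = (ρ_ X').hom ≫ (λ_ X').inv := by
  have main : e.inv ≫ X ◁ ((ρ_ X').inv ≫ X' ◁ e.inv ≫ (α_ X' X X').inv
      ≫ dEv X X' e f ▷ X' ≫ (λ_ X').hom) = e.inv := by
    calc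
      _ = (e.inv ≫ (ρ_ (X ⊗ X')).inv ≫ (X ⊗ X') ◁ e.inv) ⊗≫
            X ◁ dEv X X' e f ▷ X' ⊗≫ 𝟙 _ := by
        monoidal
      _ = (e.inv ≫ (λ_ (X ⊗ X')).inv ≫ e.inv ▷ (X ⊗ X')) ⊗≫
            X ◁ dEv X X' e f ▷ X' ⊗≫ 𝟙 _ := by
        rw [unit_interchange]
      _ = e.inv ⊗≫ (e.inv ▷ X ⊗≫ X ◁ dEv X X' e f) ▷ X' ⊗≫ 𝟙 _ := by
        monoidal
      _ = e.inv := by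
        rw [zig1'']; monoidal
  have N1 : (ρ_ X').inv ≫ X' ◁ e.inv ≫ (α_ X' X X').inv
      ≫ dEv X X' e f ▷ X' ≫ (λ_ X').hom = 𝟙 X' := by
    apply whiskerLeft_cancel f
    rw [MonoidalCategory.whiskerLeft_id, ← cancel_epi e.inv, Category.comp_id]
    exact main
  rw [← cancel_epi (ρ_ X').inv, ← cancel_mono (λ_ X').hom]
  simpa using N1

/-- An invertible object is exactly paired with its inverse. -/
def pairingOfInv : ExactPairing X X' where
  coevaluation' := e.inv
  evaluation' := dEv X X' e f
  coevaluation_evaluation' := zig2 X X' e f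
  evaluation_coevaluation' := zig1 X X' e f

end Pairing

lemma rightDualIso_coev {A B₁ B₂ : C} (p : ExactPairing A B₁) (q : ExactPairing A B₂) :
    @ExactPairing.coevaluation C _ _ A B₁ p ≫ A ◁ (rightDualIso p q).hom
      = @ExactPairing.coevaluation C _ _ A B₂ q := by
  letI := p
  letI := q
  dsimp [rightDualIso, rightAdjointMate]
  simp only [id_whiskerRight, MonoidalCategory.whiskerLeft_id, Category.comp_id,
    Category.id_comp]
  calc
    _ = 𝟙 _ ⊗≫ (η_ A B₁ ▷ 𝟙_ C ≫ ((A ⊗ B₁) : C) ◁ η_ A B₂) ⊗≫ A ◁ ε_ A B₁ ▷ B₂ ⊗≫ 𝟙 _ := by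
      monoidal
    _ = 𝟙 _ ⊗≫ (𝟙_ C ◁ η_ A B₂ ≫ η_ A B₁ ▷ ((A ⊗ B₂) : C)) ⊗≫ A ◁ ε_ A B₁ ▷ B₂ ⊗≫ 𝟙 _ := by
      rw [← whisker_exchange]
    _ = η_ A B₂ ⊗≫ (η_ A B₁ ▷ A ⊗≫ A ◁ ε_ A B₁) ▷ B₂ ⊗≫ 𝟙 _ := by
      monoidal
    _ = η_ A B₂ := by
      rw [ExactPairing.evaluation_coevaluation'']; monoidal

lemma aux (A B A' : C) [ExactPairing A B] (e : A ⊗ A' ≅ 𝟙_ C) (f : A' ⊗ A ≅ 𝟙_ C) :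
    IsIso (η_ A B) ∧ Nonempty (B ≅ A') := by
  have h := rightDualIso_coev (pairingOfInv A A' e f) ‹ExactPairing A B›
  have hc : @ExactPairing.coevaluation C _ _ A A' (pairingOfInv A A' e f) = e.inv := rfl
  rw [hc] at h
  constructor
  · rw [← h]
    infer_instance
  · exact ⟨rightDualIso ‹ExactPairing A B› (pairingOfInv A A' e f)⟩

end SovereignAux

open SovereignAux in
/-- In a sovereign monoidal category (encoded here by an object `X` having a two-sided
dual `Y`, i.e. exact pairings in both orders) with simple and absolutely simple tensor
unit, `X` is invertible iff the coevaluations `b_X : 𝟙 ⟶ X ⊗ Y` and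
`b̃_X : 𝟙 ⟶ Y ⊗ X` are invertible. -/
theorem invertible_iff_coevaluations_isIso
    {k : Type*} [Field k] {C : Type*} [Category C] [MonoidalCategory C]
    [Preadditive C] [Linear k C] [MonoidalPreadditive C]
    (hsimple : Simple (𝟙_ C))
    (habs : ∀ f : 𝟙_ C ⟶ 𝟙_ C, ∃ c : k, f = c • 𝟙 (𝟙_ C))
    (X Y : C) [ExactPairing X Y] [ExactPairing Y X] :
    (∃ X' : C, Nonempty (X ⊗ X' ≅ 𝟙_ C) ∧ Nonempty (X' ⊗ X ≅ 𝟙_ C)) ↔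
      (IsIso (η_ X Y) ∧ IsIso (η_ Y X)) := by
  constructor
  · rintro ⟨X', ⟨e⟩, ⟨f⟩⟩
    obtain ⟨h1, ⟨j⟩⟩ := aux X Y X' e f
    obtain ⟨h2, -⟩ := aux Y X X (whiskerRightIso j X ≪≫ f) (whiskerLeftIso X j ≪≫ e)
    exact ⟨h1, h2⟩
  · rintro ⟨h1, h2⟩
    exact ⟨Y, ⟨(asIso (η_ X Y)).symm⟩, ⟨(asIso (η_ Y X)).symm⟩⟩
end

section
/- Let A be a Frobenius algebra (with automorphisms respecting both algebra and coalgebra structure) and H ≤ Aut(A) finite, with P = e∘r as above. Then A_P with product r∘m∘(e⊗e), unit r∘η, coproduct (r⊗r)∘Δ∘e, and counit ε∘e is a Frobenius algebra; e is a morphism of algebras and r is a morphism of coalgebras. -/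
open CategoryTheory MonoidalCategory

set_option maxHeartbeats 1600000 in
/-- Let `A` be a Frobenius algebra (with automorphisms respecting both the algebra and
the coalgebra structure) and `S ≤ Aut(A)` finite, with `P = e ∘ r` as before.  Then
`A_P` with product `r∘m∘(e⊗e)`, unit `r∘η`, coproduct `(r⊗r)∘Δ∘e` and counit `ε∘e` is
a Frobenius algebra; `e` is a morphism of algebras and `r` is a morphism of
coalgebras. -/
theorem fixed_algebra_is_frobenius
    {k : Type*} [Field k] [CharZero k] {C : Type*} [Category C] [MonoidalCategory C]
    [Abelian C] [Linear k C] [MonoidalPreadditive C] [MonoidalLinear k C]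
    (A : C) (m : A ⊗ A ⟶ A) (η : 𝟙_ C ⟶ A) (Δ : A ⟶ A ⊗ A) (ε : A ⟶ 𝟙_ C)
    (hassoc : (m ▷ A) ≫ m = (α_ A A A).hom ≫ (A ◁ m) ≫ m)
    (hlu : (η ▷ A) ≫ m = (λ_ A).hom)
    (hru : (A ◁ η) ≫ m = (ρ_ A).hom)
    (hcoassoc : Δ ≫ (Δ ▷ A) ≫ (α_ A A A).hom = Δ ≫ (A ◁ Δ))
    (hlc : Δ ≫ (ε ▷ A) ≫ (λ_ A).hom = 𝟙 A)
    (hrc : Δ ≫ (A ◁ ε) ≫ (ρ_ A).hom = 𝟙 A)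
    (hfrob1 : (Δ ▷ A) ≫ (α_ A A A).hom ≫ (A ◁ m) = m ≫ Δ)
    (hfrob2 : (A ◁ Δ) ≫ (α_ A A A).inv ≫ (m ▷ A) = m ≫ Δ)
    (S : Finset (A ⟶ A))
    -- elements of S are automorphisms of A as a Frobenius algebra
    (halg : ∀ α ∈ S, m ≫ α = (α ⊗ₘ α) ≫ m ∧ η ≫ α = η ∧
      α ≫ Δ = Δ ≫ (α ⊗ₘ α) ∧ α ≫ ε = ε ∧ IsIso α)
    (hid : 𝟙 A ∈ S)
    (hcomp : ∀ α ∈ S, ∀ β ∈ S, α ≫ β ∈ S)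
    (hinv : ∀ α ∈ S, ∃ β ∈ S, α ≫ β = 𝟙 A ∧ β ≫ α = 𝟙 A)
    (P : A ⟶ A) (hP : P = (S.card : k)⁻¹ • ∑ α ∈ S, α)
    (AP : C) (e : AP ⟶ A) (r : A ⟶ AP) [Mono e] [Epi r]
    (hfact : P = r ≫ e) (hre : e ≫ r = 𝟙 AP) :
    ∀ (mP : AP ⊗ AP ⟶ AP) (ηP : 𝟙_ C ⟶ AP) (ΔP : AP ⟶ AP ⊗ AP) (εP : AP ⟶ 𝟙_ C),
      mP = (e ⊗ₘ e) ≫ m ≫ r → ηP = η ≫ r →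
      ΔP = e ≫ Δ ≫ (r ⊗ₘ r) → εP = e ≫ ε →
      -- algebra axioms
      ((mP ▷ AP) ≫ mP = (α_ AP AP AP).hom ≫ (AP ◁ mP) ≫ mP) ∧
      ((ηP ▷ AP) ≫ mP = (λ_ AP).hom) ∧
      ((AP ◁ ηP) ≫ mP = (ρ_ AP).hom) ∧
      -- coalgebra axioms
      (ΔP ≫ (ΔP ▷ AP) ≫ (α_ AP AP AP).hom = ΔP ≫ (AP ◁ ΔP)) ∧
      (ΔP ≫ (εP ▷ AP) ≫ (λ_ AP).hom = 𝟙 AP) ∧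
      (ΔP ≫ (AP ◁ εP) ≫ (ρ_ AP).hom = 𝟙 AP) ∧
      -- Frobenius property
      ((ΔP ▷ AP) ≫ (α_ AP AP AP).hom ≫ (AP ◁ mP) = mP ≫ ΔP) ∧
      ((AP ◁ ΔP) ≫ (α_ AP AP AP).inv ≫ (mP ▷ AP) = mP ≫ ΔP) ∧
      -- e is a morphism of algebras, r a morphism of coalgebras
      (mP ≫ e = (e ⊗ₘ e) ≫ m) ∧ (ηP ≫ e = η) ∧
      (r ≫ ΔP = Δ ≫ (r ⊗ₘ r)) ∧ (r ≫ εP = ε) := by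
  intro mP ηP ΔP εP hmPd hηPd hΔPd hεPd
  have hcard : (S.card : k) ≠ 0 := by simpa using Finset.card_ne_zero_of_mem hid
  -- averaging lemmas
  have havgR : ∀ {X : C} (f : X ⟶ A), (∀ α ∈ S, f ≫ α = f) → f ≫ P = f := by
    intro X f hf
    rw [hP, Linear.comp_smul, Preadditive.comp_sum, Finset.sum_congr rfl hf,
      Finset.sum_const, ← Nat.cast_smul_eq_nsmul k, inv_smul_smul₀ hcard]
  have havgL : ∀ {X : C} (f : A ⟶ X), (∀ α ∈ S, α ≫ f = f) → P ≫ f = f := by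
    intro X f hf
    rw [hP, Linear.smul_comp, Preadditive.sum_comp, Finset.sum_congr rfl hf,
      Finset.sum_const, ← Nat.cast_smul_eq_nsmul k, inv_smul_smul₀ hcard]
  have hPα : ∀ α ∈ S, P ≫ α = P := by
    intro α hα
    obtain ⟨β, hβ, hαβ, hβα⟩ := hinv α hα
    have h : ∑ γ ∈ S, γ ≫ α = ∑ γ ∈ S, γ := by
      refine Finset.sum_nbij' (i := (· ≫ α)) (j := (· ≫ β)) (fun γ hγ => hcomp γ hγ α hα)
        (fun γ hγ => hcomp γ hγ β hβ) ?_ ?_ (fun γ hγ => rfl)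
      · intro γ hγ; rw [Category.assoc, hαβ, Category.comp_id]
      · intro γ hγ; rw [Category.assoc, hβα, Category.comp_id]
    rw [hP, Linear.smul_comp, Preadditive.sum_comp, h]
  have hαP : ∀ α ∈ S, α ≫ P = P := by
    intro α hα
    obtain ⟨β, hβ, hαβ, hβα⟩ := hinv α hα
    have h : ∑ γ ∈ S, α ≫ γ = ∑ γ ∈ S, γ := by
      refine Finset.sum_nbij' (i := (α ≫ ·)) (j := (β ≫ ·)) (fun γ hγ => hcomp α hα γ hγ)
        (fun γ hγ => hcomp β hβ γ hγ) ?_ ?_ (fun γ hγ => rfl)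
      · intro γ hγ; rw [← Category.assoc, hβα, Category.id_comp]
      · intro γ hγ; rw [← Category.assoc, hαβ, Category.id_comp]
    rw [hP, Linear.comp_smul, Preadditive.comp_sum, h]
  have hPe : e ≫ P = e := by rw [hfact, ← Category.assoc, hre, Category.id_comp]
  have hPr : P ≫ r = r := by rw [hfact, Category.assoc, hre, Category.comp_id]
  have heα : ∀ α ∈ S, e ≫ α = e := by
    intro α hα; rw [← hPe, Category.assoc, hPα α hα]
  have hee : (e ⊗ₘ e) ≫ (P ⊗ₘ P) = e ⊗ₘ e := by rw [tensorHom_comp_tensorHom, hPe]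
  have hrr : (P ⊗ₘ P) ≫ (r ⊗ₘ r) = r ⊗ₘ r := by rw [tensorHom_comp_tensorHom, hPr]
  -- key invariance lemmas
  have hmPkey : ((P ⊗ₘ P) ≫ m) ≫ P = (P ⊗ₘ P) ≫ m := by
    refine havgR _ (fun α hα => ?_)
    rw [Category.assoc, (halg α hα).1, ← Category.assoc, tensorHom_comp_tensorHom, hPα α hα]
  have hΔPkey : P ≫ (Δ ≫ (P ⊗ₘ P)) = Δ ≫ (P ⊗ₘ P) := by
    refine havgL _ (fun α hα => ?_)
    rw [← Category.assoc, (halg α hα).2.2.1, Category.assoc, tensorHom_comp_tensorHom, hαP α hα]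
  -- derived structure maps
  have hM : mP ≫ e = (e ⊗ₘ e) ≫ m := by
    have h1 : (e ⊗ₘ e) ≫ m ≫ P = (e ⊗ₘ e) ≫ m := by
      conv_lhs => rw [← hee]
      rw [Category.assoc, ← Category.assoc (P ⊗ₘ P) m P, hmPkey, ← Category.assoc, hee]
    rw [hmPd]
    simp only [Category.assoc]
    rw [← hfact, h1]
  have hηe : ηP ≫ e = η := by
    rw [hηPd, Category.assoc, ← hfact]
    exact havgR η (fun α hα => (halg α hα).2.1)
  have hrD : r ≫ ΔP = Δ ≫ (r ⊗ₘ r) := by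
    rw [hΔPd, ← Category.assoc, ← hfact, ← hrr, ← Category.assoc Δ, ← Category.assoc, hΔPkey]
  have hrE : r ≫ εP = ε := by
    rw [hεPd, ← Category.assoc, ← hfact]
    exact havgL ε (fun α hα => (halg α hα).2.2.2.1)
  -- cancellation helpers
  have cancel_e : ∀ {X : C} (f g : X ⟶ AP), f ≫ e = g ≫ e → f = g := by
    intro X f g h
    rw [← Category.comp_id f, ← hre, ← Category.assoc, h, Category.assoc, hre, Category.comp_id]
  have cancel_r : ∀ {X : C} (f g : AP ⟶ X), r ≫ f = r ≫ g → f = g := by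
    intro X f g h
    rw [← Category.id_comp f, ← hre, Category.assoc, h, ← Category.assoc, hre, Category.id_comp]
  -- the swap lemma
  have hswap : e ≫ Δ ≫ (A ◁ P) = e ≫ Δ ≫ (P ▷ A) := by
    have hterm : ∀ γ ∈ S, ∀ δ, δ ∈ S → γ ≫ δ = 𝟙 A → δ ≫ γ = 𝟙 A →
        e ≫ Δ ≫ (A ◁ γ) = e ≫ Δ ≫ (δ ▷ A) := by
      intro γ hγ δ hδ hγδ hδγ
      have h1 : (δ ⊗ₘ δ) ≫ (A ◁ γ) = δ ▷ A := by
        rw [← id_tensorHom, tensorHom_comp_tensorHom, Category.comp_id, hδγ, tensorHom_id]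
      symm
      calc e ≫ Δ ≫ δ ▷ A = e ≫ Δ ≫ (δ ⊗ₘ δ) ≫ A ◁ γ := by rw [h1]
        _ = e ≫ (Δ ≫ (δ ⊗ₘ δ)) ≫ A ◁ γ := by simp only [Category.assoc]
        _ = (e ≫ δ) ≫ Δ ≫ A ◁ γ := by rw [← (halg δ hδ).2.2.1]; simp only [Category.assoc]
        _ = e ≫ Δ ≫ A ◁ γ := by rw [heα δ hδ]
    rw [hP]
    simp only [MonoidalLinear.whiskerLeft_smul, MonoidalLinear.smul_whiskerRight,
      whiskerLeft_sum, sum_whiskerRight, Linear.comp_smul, Preadditive.comp_sum]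
    congr 1
    refine Finset.sum_bij' (i := fun γ hγ => (hinv γ hγ).choose)
      (j := fun γ hγ => (hinv γ hγ).choose) (fun γ hγ => ((hinv γ hγ).choose_spec).1)
      (fun γ hγ => ((hinv γ hγ).choose_spec).1) ?_ ?_ ?_
    · intro γ hγ
      have hδS := ((hinv γ hγ).choose_spec).1
      have hγδ := ((hinv γ hγ).choose_spec).2.1
      have hδμ := ((hinv _ hδS).choose_spec).2.1
      calc (hinv _ hδS).choose
          = (γ ≫ (hinv γ hγ).choose) ≫ (hinv _ hδS).choose := by
            rw [hγδ, Category.id_comp]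
        _ = γ := by rw [Category.assoc, hδμ, Category.comp_id]
    · intro γ hγ
      have hδS := ((hinv γ hγ).choose_spec).1
      have hγδ := ((hinv γ hγ).choose_spec).2.1
      have hδμ := ((hinv _ hδS).choose_spec).2.1
      calc (hinv _ hδS).choose
          = (γ ≫ (hinv γ hγ).choose) ≫ (hinv _ hδS).choose := by
            rw [hγδ, Category.id_comp]
        _ = γ := by rw [Category.assoc, hδμ, Category.comp_id]
    · intro γ hγ
      obtain ⟨hδS, hγδ, hδγ⟩ := (hinv γ hγ).choose_spec
      exact hterm γ hγ _ hδS hγδ hδγ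
  have hswap' : (e ≫ Δ) ≫ (𝟙 A ⊗ₘ P) = (e ≫ Δ) ≫ (P ⊗ₘ 𝟙 A) := by
    simp only [id_tensorHom, tensorHom_id, Category.assoc]
    exact hswap
  refine ⟨?_, ?_, ?_, ?_, ?_, ?_, ?_, ?_, hM, hηe, hrD, hrE⟩
  · -- associativity
    apply cancel_e
    simp only [Category.assoc]
    rw [hM]
    have w1 : mP ▷ AP ≫ (e ⊗ₘ e) = ((e ⊗ₘ e) ⊗ₘ e) ≫ m ▷ A := by
      simp only [← tensorHom_id, tensorHom_comp_tensorHom, Category.comp_id, Category.id_comp, hM]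
    have w2 : AP ◁ mP ≫ (e ⊗ₘ e) = (e ⊗ₘ e ⊗ₘ e) ≫ A ◁ m := by
      simp only [← id_tensorHom, tensorHom_comp_tensorHom, Category.comp_id, Category.id_comp, hM]
    calc mP ▷ AP ≫ (e ⊗ₘ e) ≫ m
        = (((e ⊗ₘ e) ⊗ₘ e) ≫ m ▷ A) ≫ m := by rw [← Category.assoc, w1]
      _ = ((e ⊗ₘ e) ⊗ₘ e) ≫ (α_ A A A).hom ≫ A ◁ m ≫ m := by
          rw [Category.assoc, hassoc]
      _ = (α_ AP AP AP).hom ≫ (e ⊗ₘ e ⊗ₘ e) ≫ A ◁ m ≫ m := by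
          rw [associator_naturality_assoc]
      _ = (α_ AP AP AP).hom ≫ AP ◁ mP ≫ (e ⊗ₘ e) ≫ m := by
          congr 1
          rw [← Category.assoc, ← Category.assoc, w2]
  · -- left unit
    apply cancel_e
    simp only [Category.assoc]
    rw [hM]
    have w1 : ηP ▷ AP ≫ (e ⊗ₘ e) = 𝟙_ C ◁ e ≫ η ▷ A := by
      simp only [← tensorHom_id, ← id_tensorHom, tensorHom_comp_tensorHom, Category.comp_id,
        Category.id_comp, hηe]
    calc ηP ▷ AP ≫ (e ⊗ₘ e) ≫ m = (𝟙_ C ◁ e ≫ η ▷ A) ≫ m := by rw [← Category.assoc, w1]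
      _ = 𝟙_ C ◁ e ≫ (λ_ A).hom := by rw [Category.assoc, hlu]
      _ = (λ_ AP).hom ≫ e := by rw [leftUnitor_naturality]
  · -- right unit
    apply cancel_e
    simp only [Category.assoc]
    rw [hM]
    have w1 : AP ◁ ηP ≫ (e ⊗ₘ e) = e ▷ 𝟙_ C ≫ A ◁ η := by
      simp only [← tensorHom_id, ← id_tensorHom, tensorHom_comp_tensorHom, Category.comp_id,
        Category.id_comp, hηe]
    calc AP ◁ ηP ≫ (e ⊗ₘ e) ≫ m = (e ▷ 𝟙_ C ≫ A ◁ η) ≫ m := by rw [← Category.assoc, w1]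
      _ = e ▷ 𝟙_ C ≫ (ρ_ A).hom := by rw [Category.assoc, hru]
      _ = (ρ_ AP).hom ≫ e := by rw [rightUnitor_naturality]
  · -- coassociativity
    apply cancel_r
    have w1 : (r ⊗ₘ r) ≫ ΔP ▷ AP = Δ ▷ A ≫ ((r ⊗ₘ r) ⊗ₘ r) := by
      simp only [← tensorHom_id, tensorHom_comp_tensorHom, Category.comp_id, Category.id_comp, hrD]
    have w2 : (r ⊗ₘ r) ≫ AP ◁ ΔP = A ◁ Δ ≫ (r ⊗ₘ r ⊗ₘ r) := by
      simp only [← id_tensorHom, tensorHom_comp_tensorHom, Category.comp_id, Category.id_comp, hrD]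
    slice_lhs 1 2 => rw [hrD]
    slice_rhs 1 2 => rw [hrD]
    slice_lhs 2 3 => rw [w1]
    slice_lhs 3 4 => rw [associator_naturality]
    slice_lhs 1 3 => rw [hcoassoc]
    slice_rhs 2 3 => rw [w2]
    simp only [Category.assoc]
  · -- left counit
    apply cancel_r
    have w1 : (r ⊗ₘ r) ≫ εP ▷ AP = ε ▷ A ≫ 𝟙_ C ◁ r := by
      simp only [← tensorHom_id, ← id_tensorHom, tensorHom_comp_tensorHom, Category.comp_id,
        Category.id_comp, hrE]
    slice_lhs 1 2 => rw [hrD]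
    slice_lhs 2 3 => rw [w1]
    slice_lhs 3 4 => rw [leftUnitor_naturality]
    slice_lhs 1 3 => rw [hlc]
    simp only [Category.id_comp, Category.comp_id]
  · -- right counit
    apply cancel_r
    have w1 : (r ⊗ₘ r) ≫ AP ◁ εP = A ◁ ε ≫ r ▷ 𝟙_ C := by
      simp only [← tensorHom_id, ← id_tensorHom, tensorHom_comp_tensorHom, Category.comp_id,
        Category.id_comp, hrE]
    slice_lhs 1 2 => rw [hrD]
    slice_lhs 2 3 => rw [w1]
    slice_lhs 3 4 => rw [rightUnitor_naturality]
    slice_lhs 1 3 => rw [hrc]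
    simp only [Category.id_comp, Category.comp_id]
  · -- Frobenius 1
    have hR : mP ≫ ΔP = (e ⊗ₘ e) ≫ Δ ▷ A ≫ (α_ A A A).hom ≫ A ◁ m ≫ (r ⊗ₘ r) := by
      rw [hΔPd]
      slice_lhs 1 2 => rw [hM]
      slice_lhs 2 3 => rw [← hfrob1]
      simp only [Category.assoc]
    rw [hR]
    have w1 : ΔP ▷ AP = (e ⊗ₘ e) ≫ Δ ▷ A ≫ ((r ⊗ₘ r) ⊗ₘ r) := by
      simp only [← tensorHom_id, tensorHom_comp_tensorHom, Category.comp_id, Category.id_comp, hΔPd]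
      rw [hre]
    have w2 : (r ⊗ₘ r ⊗ₘ r) ≫ AP ◁ mP = A ◁ ((P ⊗ₘ P) ≫ m) ≫ (r ⊗ₘ r) := by
      simp only [← id_tensorHom, tensorHom_comp_tensorHom, ← Category.assoc, Category.comp_id,
        Category.id_comp, hmPd, ← hfact]
    have w3 : (α_ A A A).hom ≫ A ◁ (P ⊗ₘ P) = ((𝟙 A ⊗ₘ P) ⊗ₘ P) ≫ (α_ A A A).hom := by
      simp only [← id_tensorHom]
      exact (associator_naturality _ _ _).symm
    have w4 : (e ⊗ₘ e) ≫ Δ ▷ A ≫ ((𝟙 A ⊗ₘ P) ⊗ₘ P) = (e ⊗ₘ e) ≫ Δ ▷ A ≫ ((P ⊗ₘ 𝟙 A) ⊗ₘ 𝟙 A) := by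
      simp only [← tensorHom_id, tensorHom_comp_tensorHom, ← Category.assoc, Category.comp_id,
        Category.id_comp, hPe, hswap']
    have w5 : ((P ⊗ₘ 𝟙 A) ⊗ₘ 𝟙 A) ≫ (α_ A A A).hom ≫ A ◁ m ≫ (r ⊗ₘ r)
        = (α_ A A A).hom ≫ A ◁ m ≫ (r ⊗ₘ r) := by
      rw [associator_naturality_assoc]
      congr 1
      simp only [← id_tensorHom, id_tensorHom_id, tensorHom_comp_tensorHom, ← Category.assoc,
        Category.comp_id, Category.id_comp, hPr]
    rw [w1]
    simp only [Category.assoc]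
    slice_lhs 3 4 => rw [associator_naturality]
    slice_lhs 4 5 => rw [w2]
    rw [MonoidalCategory.whiskerLeft_comp]
    slice_lhs 3 4 => rw [w3]
    slice_lhs 1 3 => rw [w4]
    slice_lhs 3 6 => rw [w5]
  · -- Frobenius 2
    have hR : mP ≫ ΔP = (e ⊗ₘ e) ≫ A ◁ Δ ≫ (α_ A A A).inv ≫ m ▷ A ≫ (r ⊗ₘ r) := by
      rw [hΔPd]
      slice_lhs 1 2 => rw [hM]
      slice_lhs 2 3 => rw [← hfrob2]
      simp only [Category.assoc]
    rw [hR]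
    have w1 : AP ◁ ΔP = (e ⊗ₘ e) ≫ A ◁ Δ ≫ (r ⊗ₘ r ⊗ₘ r) := by
      simp only [← id_tensorHom, tensorHom_comp_tensorHom, Category.comp_id, Category.id_comp, hΔPd]
      rw [hre]
    have w2 : ((r ⊗ₘ r) ⊗ₘ r) ≫ mP ▷ AP = ((P ⊗ₘ P) ≫ m) ▷ A ≫ (r ⊗ₘ r) := by
      simp only [← tensorHom_id, tensorHom_comp_tensorHom, ← Category.assoc, Category.comp_id,
        Category.id_comp, hmPd, ← hfact]
    have w3 : (α_ A A A).inv ≫ (P ⊗ₘ P) ▷ A = (P ⊗ₘ (P ⊗ₘ 𝟙 A)) ≫ (α_ A A A).inv := by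
      simp only [← tensorHom_id]
      exact (associator_inv_naturality _ _ _).symm
    have w4 : (e ⊗ₘ e) ≫ A ◁ Δ ≫ (P ⊗ₘ (P ⊗ₘ 𝟙 A)) = (e ⊗ₘ e) ≫ A ◁ Δ ≫ (𝟙 A ⊗ₘ (𝟙 A ⊗ₘ P)) := by
      simp only [← id_tensorHom, tensorHom_comp_tensorHom, ← Category.assoc, Category.comp_id,
        Category.id_comp, hPe, hswap']
    have w5 : (𝟙 A ⊗ₘ (𝟙 A ⊗ₘ P)) ≫ (α_ A A A).inv ≫ m ▷ A ≫ (r ⊗ₘ r)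
        = (α_ A A A).inv ≫ m ▷ A ≫ (r ⊗ₘ r) := by
      rw [associator_inv_naturality_assoc]
      congr 1
      simp only [← tensorHom_id, id_tensorHom_id, tensorHom_comp_tensorHom, ← Category.assoc,
        Category.comp_id, Category.id_comp, hPr]
    rw [w1]
    simp only [Category.assoc]
    slice_lhs 3 4 => rw [associator_inv_naturality]
    slice_lhs 4 5 => rw [w2]
    rw [MonoidalCategory.comp_whiskerRight]
    slice_lhs 3 4 => rw [w3]
    slice_lhs 1 3 => rw [w4]
    slice_lhs 3 6 => rw [w5]
end
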